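/- Let D ⊆ ℝⁿ be open with 0 ∈ D and consider ẋ = f(x), f locally Lipschitz, f(0) = 0. Assume: (i) local exponential stability: there exist ρ, ω > 0 and M ≥ 1 such that any solution with |x(0)| ≤ ρ satisfies |x(t)| ≤ M·e^{−ωt}|x(0)| for all t ≥ 0; (ii) uniform global asymptotic stability: there exist σ ∈ KL and a continuous function φ : D → ℝ≥0 with φ(0) = 0 and all sublevel sets {x ∈ D : φ(x) ≤ r} (for r > inf φ(D)) compact, such that every solution satisfies |x(t)| ≤ σ(φ(x(0)), t) for all t ≥ 0. Then there exists a continuous function κ : D → ℝ≥0 with κ(0) = 0 and compact sublevel sets, such that every solution satisfies |x(t)| ≤ e^{−ωt}·κ(x(0)) for all t ≥ 0. -/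

import Mathlib

def ClassK (a : ℝ → ℝ) : Prop :=
  ContinuousOn a (Set.Ici 0) ∧ StrictMonoOn a (Set.Ici 0) ∧ a 0 = 0

def ClassKInf (a : ℝ → ℝ) : Prop :=
  ClassK a ∧ Filter.Tendsto a Filter.atTop Filter.atTop

def ClassKL (σ : ℝ → ℝ → ℝ) : Prop :=
  ContinuousOn (fun p : ℝ × ℝ => σ p.1 p.2) (Set.Ici 0 ×ˢ Set.Ici 0) ∧
  (∀ t ≥ (0:ℝ), StrictMonoOn (fun s => σ s t) (Set.Ici 0) ∧ σ 0 t = 0) ∧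
  (∀ s ≥ (0:ℝ), AntitoneOn (fun t => σ s t) (Set.Ici 0) ∧
    Filter.Tendsto (fun t => σ s t) Filter.atTop (nhds 0))

/-- A solution of the system `ẋ = f(x)` remaining in `D` for all `t ≥ 0`. -/
def IsSolution {n : ℕ} (f : EuclideanSpace ℝ (Fin n) → EuclideanSpace ℝ (Fin n))
    (D : Set (EuclideanSpace ℝ (Fin n))) (x : ℝ → EuclideanSpace ℝ (Fin n)) : Prop :=
  (∀ t ≥ (0:ℝ), x t ∈ D) ∧ ∀ t ≥ (0:ℝ), HasDerivAt x (f (x t)) t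

theorem stmt19 (n : ℕ) (D : Set (EuclideanSpace ℝ (Fin n))) (hD : IsOpen D)
    (h0 : (0 : EuclideanSpace ℝ (Fin n)) ∈ D)
    (f : EuclideanSpace ℝ (Fin n) → EuclideanSpace ℝ (Fin n))
    (hf : ∀ x ∈ D, ∃ ε > (0:ℝ), ∃ K : NNReal,
      LipschitzOnWith K f (Metric.ball x ε ∩ D))
    (hf0 : f 0 = 0)
    (ρ ω M : ℝ) (hρ : 0 < ρ) (hω : 0 < ω) (hM : 1 ≤ M)
    (hLES : ∀ x : ℝ → EuclideanSpace ℝ (Fin n), IsSolution f D x → ‖x 0‖ ≤ ρ →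
      ∀ t ≥ (0:ℝ), ‖x t‖ ≤ M * Real.exp (-ω * t) * ‖x 0‖)
    (σ : ℝ → ℝ → ℝ) (hσ : ClassKL σ)
    (φ : EuclideanSpace ℝ (Fin n) → ℝ)
    (hφc : ContinuousOn φ D) (hφ0 : φ 0 = 0) (hφnn : ∀ x ∈ D, 0 ≤ φ x)
    (hφsize : ∀ r : ℝ, (∃ x ∈ D, φ x < r) → IsCompact {x ∈ D | φ x ≤ r})
    (hUGAS : ∀ x : ℝ → EuclideanSpace ℝ (Fin n), IsSolution f D x →
      ∀ t ≥ (0:ℝ), ‖x t‖ ≤ σ (φ (x 0)) t) :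
    ∃ κ : EuclideanSpace ℝ (Fin n) → ℝ,
      ContinuousOn κ D ∧ κ 0 = 0 ∧ (∀ x ∈ D, 0 ≤ κ x) ∧
      (∀ r : ℝ, (∃ x ∈ D, κ x < r) → IsCompact {x ∈ D | κ x ≤ r}) ∧
      ∀ x : ℝ → EuclideanSpace ℝ (Fin n), IsSolution f D x →
        ∀ t ≥ (0:ℝ), ‖x t‖ ≤ Real.exp (-ω * t) * κ (x 0) := by
  classical
  obtain ⟨hσcont, hσmono, hσanti⟩ := hσ
  have hσ00 : σ 0 0 = 0 := (hσmono 0 le_rfl).2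
  -- nonnegativity of σ
  have hσnn : ∀ s ≥ (0:ℝ), ∀ t ≥ (0:ℝ), 0 ≤ σ s t := by
    intro s hs t ht
    rcases eq_or_lt_of_le hs with h | h
    · rw [← h, (hσmono t ht).2]
    · have h2 : σ 0 t < σ s t :=
        (hσmono t ht).1 (Set.mem_Ici.2 le_rfl) (Set.mem_Ici.2 hs) h
      linarith [(hσmono t ht).2]
  -- continuity of σ s · on Ici 0
  have hcont1 : ∀ s ≥ (0:ℝ), ContinuousOn (fun t => σ s t) (Set.Ici 0) := by
    intro s hs
    exact hσcont.comp ((continuous_const.prodMk continuous_id).continuousOn)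
      (fun t ht => Set.mk_mem_prod (Set.mem_Ici.2 hs) ht)
  -- the hitting-time function
  set τ : ℝ → ℝ := fun s => sInf {t | 0 ≤ t ∧ σ (max s 0) t ≤ ρ} with hτdef
  have setne : ∀ s : ℝ, {t | 0 ≤ t ∧ σ (max s 0) t ≤ ρ}.Nonempty := by
    intro s
    have h2 : Filter.Tendsto (fun t => σ (max s 0) t) Filter.atTop (nhds 0) :=
      (hσanti (max s 0) (le_max_right _ _)).2
    have h3 : ∀ᶠ t in Filter.atTop, σ (max s 0) t < ρ :=
      h2.eventually (Filter.Tendsto.eventually_lt_const hρ Filter.tendsto_id)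
    obtain ⟨t, ht0, htρ⟩ := (Filter.eventually_ge_atTop 0 |>.and h3).exists
    exact ⟨t, ht0, htρ.le⟩
  have setbdd : ∀ s : ℝ, BddBelow {t | 0 ≤ t ∧ σ (max s 0) t ≤ ρ} :=
    fun s => ⟨0, fun t ht => ht.1⟩
  have setclosed : ∀ s : ℝ, IsClosed {t | 0 ≤ t ∧ σ (max s 0) t ≤ ρ} := by
    intro s
    have : {t | 0 ≤ t ∧ σ (max s 0) t ≤ ρ}
        = Set.Ici 0 ∩ (fun t => σ (max s 0) t) ⁻¹' Set.Iic ρ := by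
      ext t; simp [Set.mem_Ici, Set.mem_Iic, and_comm]
    rw [this]
    exact (hcont1 (max s 0) (le_max_right _ _)).preimage_isClosed_of_isClosed
      isClosed_Ici isClosed_Iic
  have hτmem : ∀ s : ℝ, 0 ≤ τ s ∧ σ (max s 0) (τ s) ≤ ρ :=
    fun s => (setclosed s).csInf_mem (setne s) (setbdd s)
  have hτmono : Monotone τ := by
    intro a b hab
    apply csInf_le_csInf (setbdd a) (setne b)
    intro t ht
    refine ⟨ht.1, le_trans ?_ ht.2⟩
    exact ((hσmono t ht.1).1.monotoneOn) (Set.mem_Ici.2 (le_max_right _ _))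
      (Set.mem_Ici.2 (le_max_right _ _)) (max_le_max hab le_rfl)
  have hτint : ∀ a b : ℝ, IntervalIntegrable τ MeasureTheory.volume a b :=
    fun a b => hτmono.intervalIntegrable
  set H : ℝ → ℝ := fun s => ∫ u in s..(s+1), τ u with hHdef
  have hHcont : Continuous H := by
    have hp := intervalIntegral.continuous_primitive hτint 0
    have : H = fun s => (∫ u in (0:ℝ)..(s+1), τ u) - ∫ u in (0:ℝ)..s, τ u := by
      funext s
      rw [intervalIntegral.integral_interval_sub_left (hτint 0 (s+1)) (hτint 0 s)]
    rw [this]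
    exact (hp.comp (continuous_id.add continuous_const)).sub hp
  have hHge : ∀ s : ℝ, τ s ≤ H s := by
    intro s
    have hc : τ s = ∫ _ in s..(s+1), τ s := by
      rw [intervalIntegral.integral_const]; simp
    rw [hc]
    apply intervalIntegral.integral_mono_on (by linarith) intervalIntegrable_const
      (hτint s (s+1))
    intro u hu
    exact hτmono hu.1
  have hH0 : ∀ s : ℝ, 0 ≤ H s := fun s => le_trans (hτmem s).1 (hHge s)
  have hσHρ : ∀ s ≥ (0:ℝ), σ s (H s) ≤ ρ := by
    intro s hs
    have h1 : σ s (τ s) ≤ ρ := by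
      have := (hτmem s).2
      rwa [max_eq_left hs] at this
    refine le_trans ?_ h1
    exact (hσanti s hs).1 (Set.mem_Ici.2 (hτmem s).1)
      (Set.mem_Ici.2 (hH0 s)) (hHge s)
  -- the gain function
  refine ⟨fun z => M * Real.exp (ω * H (φ z)) * σ (φ z) 0 + φ z, ?_, ?_, ?_, ?_, ?_⟩
  · -- continuity
    have hσ0c : ContinuousOn (fun s => σ s 0) (Set.Ici 0) :=
      hσcont.comp ((continuous_id.prodMk continuous_const).continuousOn)
        (fun s hs => Set.mk_mem_prod hs (Set.mem_Ici.2 le_rfl))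
    have h1 : ContinuousOn (fun z => σ (φ z) 0) D :=
      hσ0c.comp hφc (fun z hz => Set.mem_Ici.2 (hφnn z hz))
    have h2 : ContinuousOn (fun z => Real.exp (ω * H (φ z))) D :=
      (Real.continuous_exp.comp (continuous_const.mul hHcont)).comp_continuousOn hφc
    exact ((continuousOn_const.mul h2).mul h1).add hφc
  · -- vanishes at 0
    simp [hφ0, hσ00]
  · -- nonneg
    intro z hz
    show 0 ≤ M * Real.exp (ω * H (φ z)) * σ (φ z) 0 + φ z
    have h1 : 0 ≤ σ (φ z) 0 := hσnn (φ z) (hφnn z hz) 0 le_rfl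
    have h2 : (0:ℝ) < Real.exp (ω * H (φ z)) := Real.exp_pos _
    have h3 : 0 ≤ M * Real.exp (ω * H (φ z)) * σ (φ z) 0 :=
      mul_nonneg (mul_nonneg (by linarith) h2.le) h1
    have := hφnn z hz
    linarith
  · -- compact sublevel sets
    intro r ⟨w, hwD, hwr⟩
    have hκφ : ∀ z ∈ D, φ z ≤ M * Real.exp (ω * H (φ z)) * σ (φ z) 0 + φ z := by
      intro z hz
      have h1 : 0 ≤ σ (φ z) 0 := hσnn (φ z) (hφnn z hz) 0 le_rfl
      have h2 : (0:ℝ) < Real.exp (ω * H (φ z)) := Real.exp_pos _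
      have h3 : 0 ≤ M * Real.exp (ω * H (φ z)) * σ (φ z) 0 :=
        mul_nonneg (mul_nonneg (by linarith) h2.le) h1
      linarith
    have hw' : φ w < r := lt_of_le_of_lt (hκφ w hwD) hwr
    have hK : IsCompact {x ∈ D | φ x ≤ r} := hφsize r ⟨w, hwD, hw'⟩
    have hκc : ContinuousOn (fun z => M * Real.exp (ω * H (φ z)) * σ (φ z) 0 + φ z)
        {x ∈ D | φ x ≤ r} := by
      have hσ0c : ContinuousOn (fun s => σ s 0) (Set.Ici 0) :=
        hσcont.comp ((continuous_id.prodMk continuous_const).continuousOn)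
          (fun s hs => Set.mk_mem_prod hs (Set.mem_Ici.2 le_rfl))
      have h1 : ContinuousOn (fun z => σ (φ z) 0) D :=
        hσ0c.comp hφc (fun z hz => Set.mem_Ici.2 (hφnn z hz))
      have h2 : ContinuousOn (fun z => Real.exp (ω * H (φ z))) D :=
        (Real.continuous_exp.comp (continuous_const.mul hHcont)).comp_continuousOn hφc
      exact (((continuousOn_const.mul h2).mul h1).add hφc).mono (fun z hz => hz.1)
    have heq : {x ∈ D | M * Real.exp (ω * H (φ x)) * σ (φ x) 0 + φ x ≤ r}
        = {x ∈ D | φ x ≤ r} ∩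
          (fun z => M * Real.exp (ω * H (φ z)) * σ (φ z) 0 + φ z) ⁻¹' Set.Iic r := by
      ext z
      constructor
      · rintro ⟨hzD, hzr⟩
        exact ⟨⟨hzD, le_trans (hκφ z hzD) hzr⟩, hzr⟩
      · rintro ⟨⟨hzD, _⟩, hzr⟩
        exact ⟨hzD, hzr⟩
    rw [heq]
    exact hK.of_isClosed_subset
      (hκc.preimage_isClosed_of_isClosed hK.isClosed isClosed_Iic)
      Set.inter_subset_left
  · -- the main estimate
    intro x hx t ht
    have hx0D : x 0 ∈ D := hx.1 0 le_rfl
    set s := φ (x 0) with hsdef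
    have hs : 0 ≤ s := hφnn _ hx0D
    set T := H s with hTdef
    have hT0 : 0 ≤ T := hH0 s
    have hσs0 : 0 ≤ σ s 0 := hσnn s hs 0 le_rfl
    have hanti := (hσanti s hs).1
    have hσT0 : σ s T ≤ σ s 0 :=
      hanti (Set.mem_Ici.2 le_rfl) (Set.mem_Ici.2 hT0) hT0
    have he1 : (0:ℝ) < Real.exp (-ω * t) := Real.exp_pos _
    by_cases hcase : t ≤ T
    · have h1 : ‖x t‖ ≤ σ s t := hUGAS x hx t ht
      have h2 : σ s t ≤ σ s 0 :=
        hanti (Set.mem_Ici.2 le_rfl) (Set.mem_Ici.2 ht) ht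
      have h3 : (1:ℝ) ≤ Real.exp (-ω * t) * Real.exp (ω * T) := by
        rw [← Real.exp_add]
        apply Real.one_le_exp
        nlinarith
      have h4 : σ s 0 ≤ Real.exp (-ω * t) * (M * Real.exp (ω * T) * σ s 0 + s) := by
        have h5 : 0 ≤ Real.exp (-ω * t) * s := mul_nonneg he1.le hs
        have k1 : σ s 0 ≤ Real.exp (-ω * t) * Real.exp (ω * T) * σ s 0 :=
          le_mul_of_one_le_left hσs0 h3
        have k2 : Real.exp (-ω * t) * Real.exp (ω * T) * σ s 0
            ≤ M * (Real.exp (-ω * t) * Real.exp (ω * T) * σ s 0) := by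
          apply le_mul_of_one_le_left ?_ hM
          positivity
        have k3 : Real.exp (-ω * t) * (M * Real.exp (ω * T) * σ s 0 + s)
            = M * (Real.exp (-ω * t) * Real.exp (ω * T) * σ s 0)
              + Real.exp (-ω * t) * s := by ring
        rw [k3]
        linarith
      calc ‖x t‖ ≤ σ s t := h1
        _ ≤ σ s 0 := h2
        _ ≤ _ := h4
    · push_neg at hcase
      set y : ℝ → EuclideanSpace ℝ (Fin n) := fun u => x (u + T) with hydef
      have hy : IsSolution f D y := by
        constructor
        · intro u hu
          exact hx.1 (u + T) (by linarith)
        · intro u hu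
          have h := hx.2 (u + T) (by linarith)
          have hg : HasDerivAt (fun u : ℝ => u + T) 1 u := (hasDerivAt_id u).add_const T
          have := HasDerivAt.scomp u h hg
          simpa [hydef, Function.comp_def, one_smul] using this
      have hy0 : y 0 = x T := by simp [hydef]
      have hxT : ‖x T‖ ≤ σ s T := hUGAS x hx T hT0
      have hy0ρ : ‖y 0‖ ≤ ρ := by
        rw [hy0]
        exact hxT.trans (hσHρ s hs)
      have hles := hLES y hy hy0ρ (t - T) (by linarith)
      have hxt : y (t - T) = x t := by
        simp only [hydef]
        congr 1
        ring
      rw [hxt, hy0] at hles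
      have hexp : M * Real.exp (-ω * (t - T)) * ‖x T‖
          ≤ Real.exp (-ω * t) * (M * Real.exp (ω * T) * σ s 0 + s) := by
        have hMσ : ‖x T‖ ≤ σ s 0 := hxT.trans hσT0
        have hnn : (0:ℝ) ≤ ‖x T‖ := norm_nonneg _
        have hee : Real.exp (-ω * (t - T)) = Real.exp (-ω * t) * Real.exp (ω * T) := by
          rw [← Real.exp_add]; ring_nf
        rw [hee]
        have h5 : 0 ≤ Real.exp (-ω * t) * s := mul_nonneg he1.le hs
        have hM0 : (0:ℝ) < M := lt_of_lt_of_le one_pos hM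
        have heT : (0:ℝ) < Real.exp (ω * T) := Real.exp_pos _
        have k1 : M * (Real.exp (-ω * t) * Real.exp (ω * T)) * ‖x T‖
            ≤ M * (Real.exp (-ω * t) * Real.exp (ω * T)) * σ s 0 := by
          apply mul_le_mul_of_nonneg_left hMσ
          positivity
        have k2 : Real.exp (-ω * t) * (M * Real.exp (ω * T) * σ s 0 + s)
            = M * (Real.exp (-ω * t) * Real.exp (ω * T)) * σ s 0
              + Real.exp (-ω * t) * s := by ring
        rw [k2]
        linarith
      exact hles.trans hexp
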